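/- Let (G, ·, τ) be a semitopological group. If (G, τ) is a metrisable Baire space, then (G, ·, τ) is a topological group. -/

import Mathlib

open Filter Set Topology

private theorem aux_topologicalGroup_of_metric_baire {G : Type*} [Group G] [MetricSpace G]
    [BaireSpace G]
    (hmul_left : ∀ g : G, Continuous fun h : G => g * h)
    (hmul_right : ∀ g : G, Continuous fun h : G => h * g) :
    IsTopologicalGroup G := by
  -- Step A: there is a point `(z, 1)` of joint continuity of multiplication.
  obtain ⟨z, hz⟩ : ∃ z : G, ContinuousAt (fun p : G × G => p.1 * p.2) (z, 1) := by
    set F : ℕ → ℕ → Set G := fun k N =>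
      {x : G | ∀ y ∈ Metric.closedBall (1 : G) (1 / ((N : ℝ) + 1)),
        dist (x * y) x ≤ 1 / ((k : ℝ) + 1)} with hF
    have hFclosed : ∀ k N, IsClosed (F k N) := by
      intro k N
      have : F k N = ⋂ y ∈ Metric.closedBall (1 : G) (1 / ((N : ℝ) + 1)),
          {x : G | dist (x * y) x ≤ 1 / ((k : ℝ) + 1)} := by
        ext x; simp [hF]
      rw [this]
      exact isClosed_biInter fun y _ =>
        isClosed_le ((hmul_right y).dist continuous_id) continuous_const
    have hFcover : ∀ k, (⋃ N, F k N) = univ := by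
      intro k
      ext x
      simp only [mem_iUnion, mem_univ, iff_true]
      have hx : ContinuousAt (fun y : G => x * y) 1 := (hmul_left x).continuousAt
      rw [Metric.continuousAt_iff] at hx
      obtain ⟨δ, δpos, hδ⟩ := hx (1 / ((k : ℝ) + 1)) (by positivity)
      obtain ⟨N, hN⟩ := exists_nat_one_div_lt δpos
      refine ⟨N, fun y hy => ?_⟩
      have h1 : dist y 1 < δ := lt_of_le_of_lt (Metric.mem_closedBall.1 hy) hN
      have h2 := hδ h1
      simp only [mul_one] at h2
      exact le_of_lt h2
    have hEdense : ∀ k, Dense (⋃ N, interior (F k N)) := fun k =>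
      dense_iUnion_interior_of_closed (hFclosed k) (hFcover k)
    have hD : Dense (⋂ k, ⋃ N, interior (F k N)) :=
      dense_iInter_of_isOpen (fun k => isOpen_iUnion fun N => isOpen_interior) hEdense
    obtain ⟨z, hzmem⟩ := hD.nonempty
    refine ⟨z, ?_⟩
    rw [ContinuousAt, Metric.tendsto_nhds]
    intro ε εpos
    obtain ⟨k, hk⟩ := exists_nat_one_div_lt (show (0 : ℝ) < ε / 2 by linarith)
    obtain ⟨N, hzN⟩ := mem_iUnion.1 (mem_iInter.1 hzmem k)
    have hnbhd : (interior (F k N) ∩ Metric.ball z (ε / 2)) ×ˢ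
        Metric.ball (1 : G) (1 / ((N : ℝ) + 1)) ∈ 𝓝 ((z, 1) : G × G) := by
      apply prod_mem_nhds
      · exact Filter.inter_mem (isOpen_interior.mem_nhds hzN)
          (Metric.ball_mem_nhds z (by linarith))
      · exact Metric.ball_mem_nhds 1 (by positivity)
    filter_upwards [hnbhd] with p hp
    obtain ⟨⟨hp1F, hp1b⟩, hp2⟩ := hp
    have h1 : dist (p.1 * p.2) p.1 ≤ 1 / ((k : ℝ) + 1) :=
      (interior_subset hp1F) p.2 (Metric.ball_subset_closedBall hp2)
    have h2 : dist p.1 z < ε / 2 := hp1b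
    calc dist (p.1 * p.2) (z * 1) = dist (p.1 * p.2) z := by rw [mul_one]
      _ ≤ dist (p.1 * p.2) p.1 + dist p.1 z := dist_triangle _ _ _
      _ < ε := by linarith
  -- Step B: joint continuity at (1,1).
  have h11 : ContinuousAt (fun p : G × G => p.1 * p.2) (1, 1) := by
    have key : (fun p : G × G => p.1 * p.2) =
        (fun w : G => z⁻¹ * w) ∘ (fun p : G × G => p.1 * p.2) ∘
          (fun p : G × G => (z * p.1, p.2)) := by
      funext p
      simp [Function.comp, mul_assoc]
    rw [key]
    have hinner : ContinuousAt (fun p : G × G => ((z * p.1, p.2) : G × G)) (1, 1) :=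
      (((hmul_left z).comp continuous_fst).prodMk continuous_snd).continuousAt
    have hmid : ContinuousAt (fun p : G × G => p.1 * p.2)
        ((fun p : G × G => ((z * p.1, p.2) : G × G)) (1, 1)) := by simpa using hz
    exact ((hmul_left z⁻¹).continuousAt).comp
      (ContinuousAt.comp (f := fun p : G × G => ((z * p.1, p.2) : G × G)) hmid hinner)
  -- Step C: joint continuity everywhere.
  have hmulC : Continuous (fun p : G × G => p.1 * p.2) := by
    rw [continuous_iff_continuousAt]
    rintro ⟨g, h⟩
    have key : (fun p : G × G => p.1 * p.2) =
        (fun w : G => g * w * h) ∘ (fun p : G × G => p.1 * p.2) ∘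
          (fun p : G × G => (g⁻¹ * p.1, p.2 * h⁻¹)) := by
      funext p
      simp only [Function.comp]
      group
    rw [key]
    have hinner : ContinuousAt
        (fun p : G × G => ((g⁻¹ * p.1, p.2 * h⁻¹) : G × G)) (g, h) :=
      (((hmul_left g⁻¹).comp continuous_fst).prodMk
        ((hmul_right h⁻¹).comp continuous_snd)).continuousAt
    have hmid : ContinuousAt (fun p : G × G => p.1 * p.2)
        ((fun p : G × G => ((g⁻¹ * p.1, p.2 * h⁻¹) : G × G)) (g, h)) := by
      simpa using h11
    have houter : Continuous (fun w : G => g * w * h) := (hmul_right h).comp (hmul_left g)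
    exact (houter.continuousAt).comp
      (ContinuousAt.comp (f := fun p : G × G => ((g⁻¹ * p.1, p.2 * h⁻¹) : G × G)) hmid hinner)
  -- Step D: continuity of inversion at 1, by a Baire category argument.
  have hinv1 : ContinuousAt (fun x : G => x⁻¹) (1 : G) := by
    by_contra hc
    rw [Metric.continuousAt_iff] at hc
    push_neg at hc
    obtain ⟨ε, εpos, hε⟩ := hc
    have hxex : ∀ n : ℕ, ∃ x : G, dist x 1 < 1 / ((n : ℝ) + 1) ∧ ε ≤ dist x⁻¹ 1 := by
      intro n
      obtain ⟨x, h1, h2⟩ := hε (1 / ((n : ℝ) + 1)) (by positivity)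
      exact ⟨x, h1, by simpa using h2⟩
    choose x hx1 hx2 using hxex
    have hxtendsto : Tendsto x atTop (𝓝 (1 : G)) := by
      rw [Metric.tendsto_atTop]
      intro r rpos
      obtain ⟨N, hN⟩ := exists_nat_one_div_lt rpos
      refine ⟨N, fun n hn => ?_⟩
      calc dist (x n) 1 < 1 / ((n : ℝ) + 1) := hx1 n
        _ ≤ 1 / ((N : ℝ) + 1) := by
            apply one_div_le_one_div_of_le
            · positivity
            · exact_mod_cast Nat.succ_le_succ hn
        _ < r := hN
    have hAopen : ∀ k : ℕ,
        IsOpen (⋃ n, {t : G | dist ((x n)⁻¹ * t) t < 1 / ((k : ℝ) + 1)}) :=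
      fun k => isOpen_iUnion fun n =>
        isOpen_lt ((hmul_left (x n)⁻¹).dist continuous_id) continuous_const
    have hAdense : ∀ k : ℕ,
        Dense (⋃ n, {t : G | dist ((x n)⁻¹ * t) t < 1 / ((k : ℝ) + 1)}) := by
      intro k
      rw [Metric.dense_iff]
      intro c r rpos
      have htc : Tendsto (fun n => x n * c) atTop (𝓝 c) := by
        have h := ((hmul_right c).tendsto (1 : G)).comp hxtendsto
        simpa [Function.comp_def] using h
      have hev : ∀ᶠ n in atTop, x n * c ∈ Metric.ball c (min r (1 / ((k : ℝ) + 1))) :=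
        htc (Metric.ball_mem_nhds c (by positivity))
      obtain ⟨n, hn⟩ := hev.exists
      rw [Metric.mem_ball] at hn
      refine ⟨x n * c, Metric.mem_ball.2 (lt_of_lt_of_le hn (min_le_left _ _)), ?_⟩
      refine mem_iUnion.2 ⟨n, ?_⟩
      simp only [mem_setOf_eq, inv_mul_cancel_left]
      calc dist c (x n * c) = dist (x n * c) c := dist_comm _ _
        _ < 1 / ((k : ℝ) + 1) := lt_of_lt_of_le hn (min_le_right _ _)
    have hD := dense_iInter_of_isOpen hAopen hAdense
    obtain ⟨t, ht⟩ := hD.nonempty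
    have hsel : ∀ k : ℕ, ∃ n, dist ((x n)⁻¹ * t) t < 1 / ((k : ℝ) + 1) := by
      intro k
      have h := mem_iInter.1 ht k
      simpa using mem_iUnion.1 h
    choose nk hnk using hsel
    have htt : Tendsto (fun k => (x (nk k))⁻¹ * t) atTop (𝓝 t) := by
      rw [Metric.tendsto_atTop]
      intro r rpos
      obtain ⟨N, hN⟩ := exists_nat_one_div_lt rpos
      refine ⟨N, fun k hk => ?_⟩
      calc dist ((x (nk k))⁻¹ * t) t < 1 / ((k : ℝ) + 1) := hnk k
        _ ≤ 1 / ((N : ℝ) + 1) := by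
            apply one_div_le_one_div_of_le
            · positivity
            · exact_mod_cast Nat.succ_le_succ hk
        _ < r := hN
    have hinvt : Tendsto (fun k => (x (nk k))⁻¹) atTop (𝓝 (1 : G)) := by
      have h := ((hmul_right t⁻¹).tendsto t).comp htt
      simpa [Function.comp_def, mul_inv_cancel_right] using h
    have hev : ∀ᶠ k in atTop, dist ((x (nk k))⁻¹) (1 : G) < ε :=
      (Metric.tendsto_nhds.1 hinvt) ε εpos
    obtain ⟨k, hk⟩ := hev.exists
    exact absurd hk (not_lt.2 (hx2 (nk k)))
  -- Step E: continuity of inversion everywhere.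
  have hinvC : Continuous (fun x : G => x⁻¹) := by
    rw [continuous_iff_continuousAt]
    intro g
    have key : (fun x : G => x⁻¹) =
        (fun w : G => w * g⁻¹) ∘ (fun x : G => x⁻¹) ∘ (fun x : G => g⁻¹ * x) := by
      funext p
      simp [Function.comp, mul_inv_rev, mul_assoc]
    rw [key]
    have hmid : ContinuousAt (fun x : G => x⁻¹) ((fun x : G => g⁻¹ * x) g) := by
      simpa using hinv1
    exact ((hmul_right g⁻¹).continuousAt).comp (hmid.comp ((hmul_left g⁻¹).continuousAt))
  exact { continuous_mul := hmulC, continuous_inv := hinvC }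

/-- A semitopological group which is a metrisable Baire space is a topological group. -/
theorem topologicalGroup_of_metrizable_baire {G : Type*} [Group G] [TopologicalSpace G]
    [TopologicalSpace.MetrizableSpace G] [BaireSpace G]
    (hmul_left : ∀ g : G, Continuous fun h : G => g * h)
    (hmul_right : ∀ g : G, Continuous fun h : G => h * g) :
    IsTopologicalGroup G := by
  letI : MetricSpace G := TopologicalSpace.metrizableSpaceMetric G
  exact aux_topologicalGroup_of_metric_baire hmul_left hmul_right
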